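/- arXiv:1805.02507 — 5 statements merged into one kernel-verified Lean document; each statement's English description precedes it below -/
import Mathlib

section
/- Let R : [t₀, t_f] → (nonempty compact subsets of ℝⁿ) be continuous with respect to the Hausdorff distance, with convex values, and strictly expanding, i.e. R(t₁) ⊆ interior(R(t₂)) whenever t₀ ≤ t₁ < t₂ ≤ t_f. Define T(x) = inf { t ∈ [t₀, t_f] : x ∈ R(t) }. Then for every t ∈ (t₀, t_f], the boundary of R(t) equals { x ∈ ℝⁿ : T(x) = t and x ∈ R(t) }. -/
open Set Metric

/-- Boundary characterization of a strictly expanding, Hausdorff-continuous family of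
nonempty convex compact sets via the level set of the associated minimum time
function `T x = inf { t ∈ [t₀, t_f] : x ∈ R t }`. -/
theorem frontier_eq_minTime_level_set {n : ℕ} (t₀ tf : ℝ) (ht : t₀ < tf)
    (R : ℝ → Set (EuclideanSpace ℝ (Fin n)))
    (hne : ∀ t ∈ Icc t₀ tf, (R t).Nonempty)
    (hcomp : ∀ t ∈ Icc t₀ tf, IsCompact (R t))
    (hconv : ∀ t ∈ Icc t₀ tf, Convex ℝ (R t))
    (hcont : ∀ t ∈ Icc t₀ tf, ∀ ε > 0, ∃ δ > 0, ∀ s ∈ Icc t₀ tf,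
      |s - t| < δ → hausdorffDist (R s) (R t) < ε)
    (hexp : ∀ t₁ ∈ Icc t₀ tf, ∀ t₂ ∈ Icc t₀ tf, t₁ < t₂ → R t₁ ⊆ interior (R t₂)) :
    ∀ t ∈ Ioc t₀ tf,
      frontier (R t) =
        {x | sInf {s | s ∈ Icc t₀ tf ∧ x ∈ R s} = t ∧ x ∈ R t} := by
  intro t ht'
  have htmem : t ∈ Icc t₀ tf := ⟨ht'.1.le, ht'.2⟩
  have hclosed : IsClosed (R t) := (hcomp t htmem).isClosed
  ext x
  constructor
  · intro hx
    have hxRt : x ∈ R t := hclosed.frontier_subset hx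
    have hbdd : BddBelow {s | s ∈ Icc t₀ tf ∧ x ∈ R s} := ⟨t₀, fun s hs => hs.1.1⟩
    refine ⟨le_antisymm (csInf_le hbdd ⟨htmem, hxRt⟩) ?_, hxRt⟩
    refine le_csInf ⟨t, htmem, hxRt⟩ fun s hs => ?_
    by_contra hlt
    push_neg at hlt
    exact hx.2 (hexp s hs.1 t htmem hlt hs.2)
  · rintro ⟨hT, hxRt⟩
    rw [hclosed.frontier_eq]
    refine ⟨hxRt, fun hxint => ?_⟩
    obtain ⟨ε, hε, hball⟩ := Metric.isOpen_iff.1 isOpen_interior x hxint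
    have hball' : ball x ε ⊆ R t := hball.trans interior_subset
    obtain ⟨δ, hδ, hδ'⟩ := hcont t htmem (ε/2) (by positivity)
    set s := max t₀ (t - δ/2) with hs_def
    have hs1 : t - δ/2 ≤ s := le_max_right _ _
    have hsmem : s ∈ Icc t₀ tf := ⟨le_max_left _ _, max_le ht.le (by linarith [htmem.2])⟩
    have hst : s < t := max_lt ht'.1 (by linarith)
    have hdist : |s - t| < δ := abs_sub_lt_iff.2 ⟨by linarith, by linarith⟩
    have hH : hausdorffDist (R s) (R t) < ε/2 := hδ' s hsmem hdist
    have hfin : EMetric.hausdorffEdist (R t) (R s) ≠ ⊤ :=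
      hausdorffEdist_ne_top_of_nonempty_of_bounded (hne t htmem) (hne s hsmem)
        (hcomp t htmem).isBounded (hcomp s hsmem).isBounded
    have hxs : x ∈ R s := by
      by_contra hxs
      obtain ⟨f, u, hfu, hux⟩ := geometric_hahn_banach_closed_point (hconv s hsmem)
        (hcomp s hsmem).isClosed hxs
      obtain ⟨a, ha⟩ := hne s hsmem
      have hfpos : 0 < ‖f‖ := by
        rw [norm_pos_iff]
        intro h
        have h2 := (hfu a ha).trans hux
        rw [h] at h2
        simp at h2
      set v := (InnerProductSpace.toDual ℝ (EuclideanSpace ℝ (Fin n))).symm f with hv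
      have hfv : ∀ w, inner ℝ v w = f w := fun w =>
        InnerProductSpace.toDual_symm_apply
      have hvnorm : ‖v‖ = ‖f‖ := LinearIsometryEquiv.norm_map _ f
      have hvpos : 0 < ‖v‖ := hvnorm ▸ hfpos
      set z := x + (ε/2) • (‖v‖⁻¹ • v) with hz
      have hzx : dist z x = ε/2 := by
        rw [dist_eq_norm]
        have : z - x = (ε/2) • (‖v‖⁻¹ • v) := by rw [hz]; abel
        rw [this, norm_smul, norm_smul, norm_inv, norm_norm]
        rw [Real.norm_eq_abs, abs_of_pos (by positivity : (0:ℝ) < ε/2)]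
        field_simp
      have hzRt : z ∈ R t := hball' (by rw [mem_ball, hzx]; linarith)
      have hfz : f z = f x + (ε/2) * ‖f‖ := by
        rw [hz, map_add, map_smul, map_smul, ← hfv v, real_inner_self_eq_norm_sq]
        rw [smul_eq_mul, smul_eq_mul, hvnorm]
        field_simp
      have hlow : ε/2 ≤ infDist z (R s) := by
        by_contra hcon
        push_neg at hcon
        obtain ⟨y, hy, hzy⟩ := (infDist_lt_iff (hne s hsmem)).1 hcon
        have h1 : f z - f y ≤ ‖f‖ * dist z y := by
          have := f.le_opNorm (z - y)
          rw [map_sub] at this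
          calc f z - f y ≤ |f z - f y| := le_abs_self _
            _ = ‖f (z - y)‖ := by rw [map_sub]; rfl
            _ ≤ ‖f‖ * ‖z - y‖ := f.le_opNorm _
            _ = ‖f‖ * dist z y := by rw [dist_eq_norm]
        have h2 : (ε/2) * ‖f‖ < f z - f y := by
          have := (hfu y hy).trans hux
          rw [hfz]; linarith
        have := h2.trans_le h1
        nlinarith [dist_nonneg (x := z) (y := y)]

      have hup : infDist z (R s) < ε/2 :=
        lt_of_le_of_lt (by
          have := infDist_le_hausdorffDist_of_mem hzRt hfin
          rwa [hausdorffDist_comm] at this) hH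
      linarith
    have : sInf {s | s ∈ Icc t₀ tf ∧ x ∈ R s} ≤ s :=
      csInf_le ⟨t₀, fun r hr => hr.1.1⟩ ⟨hsmem, hxs⟩
    linarith [hT ▸ this]
end

section
/- Let R : [t₀, t_f] → (nonempty convex compact subsets of ℝⁿ) be strictly expanding (R(t₁) ⊆ interior R(t₂) for t₁ < t₂) and Hausdorff-continuous. If x ∈ interior(R(t)) for some t ∈ (t₀, t_f], then there exists t₁ < t with x ∈ R(t₁). -/
open Set Metric

/-- Interior points of `R t` are reached strictly earlier: if `R` is a strictly
expanding, Hausdorff-continuous family of nonempty convex compact sets and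
`x ∈ interior (R t)` for `t ∈ (t₀, t_f]`, then `x ∈ R t₁` for some `t₁ < t`. -/
theorem interior_reached_earlier {n : ℕ} (t₀ tf : ℝ) (ht : t₀ < tf)
    (R : ℝ → Set (EuclideanSpace ℝ (Fin n)))
    (hne : ∀ t ∈ Icc t₀ tf, (R t).Nonempty)
    (hcomp : ∀ t ∈ Icc t₀ tf, IsCompact (R t))
    (hconv : ∀ t ∈ Icc t₀ tf, Convex ℝ (R t))
    (hcont : ∀ t ∈ Icc t₀ tf, ∀ ε > 0, ∃ δ > 0, ∀ s ∈ Icc t₀ tf,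
      |s - t| < δ → hausdorffDist (R s) (R t) < ε)
    (hexp : ∀ t₁ ∈ Icc t₀ tf, ∀ t₂ ∈ Icc t₀ tf, t₁ < t₂ → R t₁ ⊆ interior (R t₂))
    (t : ℝ) (htI : t ∈ Ioc t₀ tf) (x : EuclideanSpace ℝ (Fin n))
    (hx : x ∈ interior (R t)) :
    ∃ t₁ ∈ Icc t₀ tf, t₁ < t ∧ x ∈ R t₁ := by
  have htIcc : t ∈ Icc t₀ tf := ⟨le_of_lt htI.1, htI.2⟩
  -- get a ball around x inside R t
  obtain ⟨ε, hε, hball⟩ := Metric.isOpen_iff.1 isOpen_interior x hx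
  have hball' : ball x ε ⊆ R t := hball.trans interior_subset
  -- continuity at t with ε/4
  obtain ⟨δ, hδ, hδc⟩ := hcont t htIcc (ε / 4) (by linarith)
  set t₁ := max t₀ (t - δ / 2) with ht₁def
  have ht₁Icc : t₁ ∈ Icc t₀ tf := ⟨le_max_left _ _,
    max_le (le_of_lt ht) (by linarith [htI.2])⟩
  have ht₁lt : t₁ < t := max_lt htI.1 (by linarith)
  have habs : |t₁ - t| < δ := by
    rw [abs_lt]
    constructor
    · have : t - δ / 2 ≤ t₁ := le_max_right _ _
      linarith
    · linarith
  have hH : hausdorffDist (R t₁) (R t) < ε / 4 := hδc t₁ ht₁Icc habs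
  refine ⟨t₁, ht₁Icc, ht₁lt, ?_⟩
  by_contra hxn
  -- separate x from the compact convex set R t₁
  obtain ⟨f, u, hfu, hux⟩ := geometric_hahn_banach_closed_point (hconv t₁ ht₁Icc)
    (hcomp t₁ ht₁Icc).isClosed hxn
  -- Riesz representation
  set z := (InnerProductSpace.toDual ℝ (EuclideanSpace ℝ (Fin n))).symm f with hz
  have hfz : ∀ w, f w = @inner ℝ _ _ z w := fun w => by
    simp [hz, InnerProductSpace.toDual_symm_apply]
  have hzne : z ≠ 0 := by
    intro h0
    obtain ⟨a, ha⟩ := hne t₁ ht₁Icc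
    have h1 := hfu a ha
    rw [hfz a, h0] at h1
    rw [hfz x, h0] at hux
    simp at h1 hux
    linarith
  have hznorm : 0 < ‖z‖ := norm_pos_iff.2 hzne
  set y := x + ((ε / 2) / ‖z‖) • z with hy
  have hyRt : y ∈ R t := by
    apply hball'
    simp only [mem_ball, hy, dist_self_add_left, norm_smul, Real.norm_eq_abs]
    rw [abs_of_pos (by positivity), div_mul_cancel₀ _ (ne_of_gt hznorm)]
    linarith
  have hfin : EMetric.hausdorffEdist (R t₁) (R t) ≠ ⊤ :=
    hausdorffEdist_ne_top_of_nonempty_of_bounded (hne t₁ ht₁Icc) (hne t htIcc)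
      (hcomp t₁ ht₁Icc).isBounded (hcomp t htIcc).isBounded
  obtain ⟨b, hb, hdb⟩ := exists_dist_lt_of_hausdorffDist_lt' hyRt hH hfin
  -- key estimates
  have h1 : f y = f x + (ε / 2) * ‖z‖ := by
    rw [hfz y, hy, inner_add_right, inner_smul_right, real_inner_self_eq_norm_sq, ← hfz x]
    field_simp
  have h2 : f y ≤ f b + ‖z‖ * (ε / 4) := by
    have := f.le_opNorm (y - b)
    have hfnorm : ‖f‖ = ‖z‖ := by
      rw [hz]
      simp [LinearIsometryEquiv.norm_map]
    have hyb : ‖y - b‖ < ε / 4 := by rw [← dist_eq_norm, dist_comm]; exact hdb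
    have : f y - f b ≤ ‖z‖ * (ε / 4) := by
      calc f y - f b = f (y - b) := by rw [map_sub]
        _ ≤ ‖f (y - b)‖ := le_abs_self _
        _ ≤ ‖f‖ * ‖y - b‖ := f.le_opNorm _
        _ ≤ ‖z‖ * (ε / 4) := by
            rw [hfnorm]
            exact mul_le_mul_of_nonneg_left (le_of_lt hyb) (norm_nonneg z)
    linarith
  have h3 : f b < u := hfu b hb
  nlinarith [hznorm]
end

section
/- Let A, B be nonempty convex compact subsets of ℝⁿ whose boundaries are denoted ∂A, ∂B. Then the Hausdorff distance between ∂A and ∂B equals the Hausdorff distance between A and B: d_H(∂A, ∂B) = d_H(A, B). -/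
open Metric EMetric Set RealInnerProductSpace

variable {E : Type*} [NormedAddCommGroup E] [NormedSpace ℝ E]

/-- Distance to a convex set evaluated on a segment is bounded by the max at endpoints. -/
lemma aux_infDist_le_max {B : Set E} (hB : Convex ℝ B) (hBne : B.Nonempty)
    {x y z : E} (hz : z ∈ segment ℝ x y) :
    infDist z B ≤ max (infDist x B) (infDist y B) := by
  obtain ⟨a, b, ha, hb, hab, rfl⟩ := hz
  refine le_of_forall_pos_le_add fun ε hε => ?_
  obtain ⟨bx, hbx, hbx'⟩ := (infDist_lt_iff hBne).1
    (lt_add_of_pos_right (infDist x B) hε)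
  obtain ⟨by', hby, hby'⟩ := (infDist_lt_iff hBne).1
    (lt_add_of_pos_right (infDist y B) hε)
  have hmem : a • bx + b • by' ∈ B := hB hbx hby ha hb hab
  have h1 : infDist (a • x + b • y) B ≤ dist (a • x + b • y) (a • bx + b • by') :=
    infDist_le_dist_of_mem hmem
  have h2 : dist (a • x + b • y) (a • bx + b • by') ≤ a * dist x bx + b * dist y by' := by
    calc dist (a • x + b • y) (a • bx + b • by')
        ≤ dist (a • x) (a • bx) + dist (b • y) (b • by') := dist_add_add_le _ _ _ _
      _ = a * dist x bx + b * dist y by' := by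
          rw [dist_smul₀, dist_smul₀, Real.norm_eq_abs, Real.norm_eq_abs,
            abs_of_nonneg ha, abs_of_nonneg hb]
  have h3 : a * dist x bx + b * dist y by' ≤
      a * (max (infDist x B) (infDist y B) + ε) + b * (max (infDist x B) (infDist y B) + ε) := by
    gcongr
    · exact hbx'.le.trans (by gcongr; exact le_max_left _ _)
    · exact hby'.le.trans (by gcongr; exact le_max_right _ _)
  have h4 : a * (max (infDist x B) (infDist y B) + ε) + b * (max (infDist x B) (infDist y B) + ε)
      = max (infDist x B) (infDist y B) + ε := by rw [← add_mul, hab, one_mul]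
  linarith

/-- A preconnected set meeting a set but not its frontier is inside the interior. -/
lemma aux_subset_interior {α : Type*} [TopologicalSpace α] {s A : Set α}
    (hs : IsPreconnected s) (h1 : (s ∩ A).Nonempty) (h2 : s ∩ frontier A = ∅) :
    s ⊆ interior A := by
  obtain ⟨a, has, haA⟩ := h1
  have hnotf : ∀ z ∈ s, z ∉ frontier A := fun z hz hf =>
    (eq_empty_iff_forall_notMem.1 h2 z) ⟨hz, hf⟩
  have haint : a ∈ interior A := by
    by_contra h
    exact hnotf a has ⟨subset_closure haA, h⟩
  have hdisj : Disjoint (interior A) (closure A)ᶜ :=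
    disjoint_compl_right.mono_left interior_subset_closure
  have hsub2 : s ⊆ interior A ∪ (closure A)ᶜ := by
    intro z hz
    by_cases hc : z ∈ closure A
    · left
      by_contra hzz
      exact hnotf z hz ⟨hc, hzz⟩
    · exact Or.inr hc
  exact IsPreconnected.subset_left_of_subset_union isOpen_interior
    isClosed_closure.isOpen_compl hdisj hsub2 ⟨a, has, haint⟩ hs

/-- From a point of a compact set, any ray meets the frontier. -/
lemma aux_ray_frontier {A : Set E} (hA : IsCompact A) {a : E} (ha : a ∈ A)
    {u : E} (hu : u ≠ 0) : ∃ t : ℝ, 0 ≤ t ∧ a + t • u ∈ frontier A := by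
  by_contra h
  push_neg at h
  set s : Set E := (fun t : ℝ => a + t • u) '' Ici 0 with hs
  have hsc : IsPreconnected s :=
    (isPreconnected_Ici).image _ (by fun_prop : Continuous fun t : ℝ => a + t • u).continuousOn
  have hsub : s ⊆ interior A := by
    refine aux_subset_interior hsc ⟨a, ⟨0, self_mem_Ici, by simp⟩, ha⟩ ?_
    rw [eq_empty_iff_forall_notMem]
    rintro z ⟨⟨t, ht, rfl⟩, hf⟩
    exact h t ht hf
  obtain ⟨R, hR⟩ := (isBounded_iff_forall_norm_le).1 hA.isBounded
  set t : ℝ := (R + ‖a‖ + 1) / ‖u‖ with htdef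
  have hupos : 0 < ‖u‖ := norm_pos_iff.2 hu
  have hRn : 0 ≤ R := le_trans (norm_nonneg a) (hR a ha)
  have htpos : 0 ≤ t := by positivity
  have hmem : a + t • u ∈ A := interior_subset (hsub ⟨t, htpos, rfl⟩)
  have hnorm : ‖a + t • u‖ ≥ t * ‖u‖ - ‖a‖ := by
    have h1 : ‖t • u‖ ≤ ‖a + t • u‖ + ‖a‖ := by
      simpa [add_sub_cancel_left] using norm_sub_le (a + t • u) a
    have h2 : ‖t • u‖ = t * ‖u‖ := by rw [norm_smul, Real.norm_eq_abs, abs_of_nonneg htpos]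
    linarith
  have : t * ‖u‖ = R + ‖a‖ + 1 := by rw [htdef, div_mul_cancel₀ _ (ne_of_gt hupos)]
  have := hR _ hmem
  linarith

/-- Supporting functional at a frontier point of a convex compact set. -/
lemma aux_support {n : ℕ} {A : Set (EuclideanSpace ℝ (Fin n))}
    (hAconv : Convex ℝ A) (hAcomp : IsCompact A) (hAne : A.Nonempty)
    {x : EuclideanSpace ℝ (Fin n)} (hx : x ∈ frontier A) :
    ∃ u : EuclideanSpace ℝ (Fin n), ‖u‖ = 1 ∧ ∀ a ∈ A, (inner ℝ u (a) : ℝ) ≤ (inner ℝ u (x) : ℝ) := by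
  let E := EuclideanSpace ℝ (Fin n)
  have hxA : x ∈ A := hAcomp.isClosed.frontier_subset hx
  have key : ∃ v : E, v ≠ 0 ∧ ∀ a ∈ A, (inner ℝ v (a) : ℝ) ≤ (inner ℝ v (x) : ℝ) := by
    by_cases hint : (interior A).Nonempty
    · obtain ⟨x₀, hx₀⟩ := hint
      have hxni : x ∉ interior A := hx.2
      obtain ⟨f, hf⟩ := geometric_hahn_banach_open_point hAconv.interior isOpen_interior hxni
      -- extend f a < f x from interior to all of A
      have hfA : ∀ a ∈ A, f a ≤ f x := by
        intro a ha
        have hseg : ∀ t : ℝ, t ∈ Ico (0:ℝ) 1 → f ((1 - t) • x₀ + t • a) < f x := by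
          intro t ht
          refine hf _ (hAconv.combo_interior_closure_mem_interior hx₀
            (subset_closure ha) (by linarith [ht.2]) ht.1 (by ring))
        have hten : Filter.Tendsto (fun t : ℝ => f ((1 - t) • x₀ + t • a)) (nhdsWithin 1 (Iio 1))
            (nhds (f ((1 - 1 : ℝ) • x₀ + (1:ℝ) • a))) := by
          apply Filter.Tendsto.mono_left _ nhdsWithin_le_nhds
          exact (f.continuous.comp (by fun_prop)).continuousAt.tendsto
        have hlim : f ((1 - 1 : ℝ) • x₀ + (1:ℝ) • a) ≤ f x := by
          refine le_of_tendsto hten ?_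
          filter_upwards [Ico_mem_nhdsLT_of_mem (by norm_num : (1:ℝ) ∈ Ioc 0 1)] with t ht
          exact (hseg t ht).le
        simpa using hlim
      set v : E := (InnerProductSpace.toDual ℝ E).symm f with hv
      have hvf : ∀ y : E, (inner ℝ v (y) : ℝ) = f y := by
        intro y
        calc (inner ℝ v y : ℝ) = (InnerProductSpace.toDual ℝ E) v y :=
              (InnerProductSpace.toDual_apply_apply).symm
          _ = f y := by rw [hv, (InnerProductSpace.toDual ℝ E).apply_symm_apply]
      refine ⟨v, ?_, fun a ha => by rw [hvf, hvf]; exact hfA a ha⟩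
      intro hv0
      have := hvf x₀
      rw [hv0] at this
      simp only [inner_zero_left] at this
      have h2 := hvf x
      rw [hv0] at h2
      simp only [inner_zero_left] at h2
      exact absurd (hf x₀ hx₀) (by rw [← this, ← h2]; exact lt_irrefl 0)
    · -- empty interior: A lies in a proper affine subspace
      have hspan : affineSpan ℝ A ≠ ⊤ := by
        intro h
        rw [← hAconv.interior_nonempty_iff_affineSpan_eq_top] at h
        exact hint h
      set K : Submodule ℝ E := (affineSpan ℝ A).direction with hK
      have hKne : K ≠ ⊤ := by
        intro h
        exact hspan (AffineSubspace.direction_eq_top_iff_of_nonempty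
          ((affineSpan_nonempty ℝ).2 hAne) |>.1 h)
      have hKo : Kᗮ ≠ ⊥ := by
        intro h
        exact hKne (Submodule.orthogonal_eq_bot_iff.1 h)
      obtain ⟨v, hvK, hv0⟩ := Submodule.exists_mem_ne_zero_of_ne_bot hKo
      refine ⟨v, hv0, fun a ha => ?_⟩
      have hd : a - x ∈ K := by
        have := AffineSubspace.vsub_mem_direction (subset_affineSpan ℝ A ha)
          (subset_affineSpan ℝ A hxA)
        simpa using this
      have : (inner ℝ v (a - x) : ℝ) = 0 := by
        have := (Submodule.mem_orthogonal K v).1 hvK _ hd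
        rwa [real_inner_comm] at this
      rw [inner_sub_right] at this
      linarith
  obtain ⟨v, hv0, hvle⟩ := key
  refine ⟨‖v‖⁻¹ • v, ?_, fun a ha => ?_⟩
  · rw [norm_smul, Real.norm_eq_abs, abs_inv, abs_norm, inv_mul_cancel₀ (norm_ne_zero_iff.2 hv0)]
  · rw [real_inner_smul_left, real_inner_smul_left]
    have := hvle a ha
    have hpos : (0:ℝ) < ‖v‖⁻¹ := inv_pos.2 (norm_pos_iff.2 hv0)
    nlinarith

lemma aux_stepA {n : ℕ} {A B : Set (EuclideanSpace ℝ (Fin n))}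
    (hBconv : Convex ℝ B) (hBne : B.Nonempty) (hBclosed : IsClosed B)
    (hAcomp : IsCompact A) (hFBne : (frontier B).Nonempty)
    (finF : hausdorffEdist (frontier A) (frontier B) ≠ ⊤)
    {u : EuclideanSpace ℝ (Fin n)} (hu : u ≠ 0)
    {a : EuclideanSpace ℝ (Fin n)} (ha : a ∈ A) :
    infDist a B ≤ hausdorffDist (frontier A) (frontier B) := by
  obtain ⟨t₁, ht₁, hz₁⟩ := aux_ray_frontier hAcomp ha hu
  obtain ⟨t₂, ht₂, hz₂⟩ := aux_ray_frontier hAcomp ha (neg_ne_zero.2 hu)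
  have hseg : a ∈ segment ℝ (a + t₁ • u) (a + t₂ • (-u)) := by
    rw [mem_segment_iff_sameRay]
    have h1 : a - (a + t₁ • u) = t₁ • (-u) := by module
    have h2 : (a + t₂ • (-u)) - a = t₂ • (-u) := by module
    rw [h1, h2]
    exact (SameRay.sameRay_nonneg_smul_left (-u) ht₁).nonneg_smul_right ht₂
  have hmax := aux_infDist_le_max hBconv hBne hseg
  have e1 : infDist (a + t₁ • u) B ≤ infDist (a + t₁ • u) (frontier B) :=
    infDist_le_infDist_of_subset hBclosed.frontier_subset hFBne
  have e2 : infDist (a + t₂ • (-u)) B ≤ infDist (a + t₂ • (-u)) (frontier B) :=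
    infDist_le_infDist_of_subset hBclosed.frontier_subset hFBne
  have f1 : infDist (a + t₁ • u) (frontier B) ≤ hausdorffDist (frontier A) (frontier B) :=
    infDist_le_hausdorffDist_of_mem hz₁ finF
  have f2 : infDist (a + t₂ • (-u)) (frontier B) ≤ hausdorffDist (frontier A) (frontier B) :=
    infDist_le_hausdorffDist_of_mem hz₂ finF
  exact hmax.trans (max_le (e1.trans f1) (e2.trans f2))

lemma aux_stepB {n : ℕ} {A B : Set (EuclideanSpace ℝ (Fin n))}
    (hAne : A.Nonempty) (hAconv : Convex ℝ A) (hAcomp : IsCompact A)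
    (hBne : B.Nonempty) (hBcomp : IsCompact B)
    (finAB : hausdorffEdist A B ≠ ⊤)
    {x : EuclideanSpace ℝ (Fin n)} (hx : x ∈ frontier A) :
    infDist x (frontier B) ≤ hausdorffDist A B := by
  set r := hausdorffDist A B with hr
  have hr0 : 0 ≤ r := hausdorffDist_nonneg
  have hxA : x ∈ A := hAcomp.isClosed.frontier_subset hx
  have hxB : infDist x B ≤ r := infDist_le_hausdorffDist_of_mem hxA finAB
  obtain ⟨b₀, hb₀B, hb₀d⟩ := hBcomp.exists_infDist_eq_dist hBne x
  by_cases hcase : (closedBall x r ∩ frontier B).Nonempty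
  · obtain ⟨p, hp1, hp2⟩ := hcase
    calc infDist x (frontier B) ≤ dist x p := infDist_le_dist_of_mem hp2
      _ ≤ r := by rw [dist_comm]; exact mem_closedBall.1 hp1
  · exfalso
    have hempty : closedBall x r ∩ frontier B = ∅ := not_nonempty_iff_eq_empty.1 hcase
    have hb₀ball : b₀ ∈ closedBall x r := by
      rw [Metric.mem_closedBall, dist_comm]
      rw [hb₀d] at hxB
      exact hxB
    have hsub : closedBall x r ⊆ interior B :=
      aux_subset_interior (convex_closedBall x r).isPreconnected ⟨b₀, hb₀ball, hb₀B⟩ hempty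
    obtain ⟨u, hu1, hule⟩ := aux_support hAconv hAcomp hAne hx
    have hp : x + r • u ∈ interior B := by
      apply hsub
      rw [Metric.mem_closedBall, dist_eq_norm]
      have : x + r • u - x = r • u := by module
      rw [this, norm_smul, Real.norm_eq_abs, abs_of_nonneg hr0, hu1, mul_one]
    obtain ⟨δ, hδ, hball⟩ := Metric.isOpen_iff.1 isOpen_interior _ hp
    have hbB : x + (r + δ/2) • u ∈ B := by
      apply interior_subset
      apply hball
      rw [Metric.mem_ball, dist_eq_norm]
      have : x + (r + δ/2) • u - (x + r • u) = (δ/2) • u := by module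
      rw [this, norm_smul, Real.norm_eq_abs, abs_of_nonneg (by linarith), hu1, mul_one]
      linarith
    have hlow : ∀ a ∈ A, r + δ/2 ≤ dist (x + (r + δ/2) • u) a := by
      intro a ha
      have h1 : (inner ℝ u (x + (r + δ/2) • u - a) : ℝ) ≤ ‖u‖ * ‖x + (r + δ/2) • u - a‖ :=
        real_inner_le_norm u _
      have hexp : x + (r + δ/2) • u - a = (r + δ/2) • u + (x - a) := by module
      have h2 : (inner ℝ u (x + (r + δ/2) • u - a) : ℝ)
          = (r + δ/2) * (inner ℝ u u : ℝ) + (inner ℝ u (x - a) : ℝ) := by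
        rw [hexp, inner_add_right, real_inner_smul_right]
      have h3 : (inner ℝ u u : ℝ) = 1 := by
        rw [real_inner_self_eq_norm_mul_norm, hu1, mul_one]
      have h4 : 0 ≤ (inner ℝ u (x - a) : ℝ) := by
        rw [inner_sub_right]
        linarith [hule a ha]
      have h5 : ‖u‖ * ‖x + (r + δ/2) • u - a‖ = dist (x + (r + δ/2) • u) a := by
        rw [hu1, one_mul, dist_eq_norm]
      rw [h3, mul_one] at h2
      linarith
    have hinf : infDist (x + (r + δ/2) • u) A ≤ r := by
      have := infDist_le_hausdorffDist_of_mem hbB (by have h : hausdorffEDist B A ≠ ⊤ := (by rw [hausdorffEDist_comm]; exact finAB); exact h)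
      rwa [hausdorffDist_comm] at this
    obtain ⟨a, haA, hda⟩ := hAcomp.exists_infDist_eq_dist hAne (x + (r + δ/2) • u)
    have := hlow a haA
    rw [← hda] at this
    linarith

/-- For nonempty convex compact sets `A`, `B` in `ℝⁿ`, the Hausdorff distance of the
boundaries equals the Hausdorff distance of the sets. -/
theorem hausdorffDist_frontier_eq {n : ℕ}
    (A B : Set (EuclideanSpace ℝ (Fin n)))
    (hAne : A.Nonempty) (hAconv : Convex ℝ A) (hAcomp : IsCompact A)
    (hBne : B.Nonempty) (hBconv : Convex ℝ B) (hBcomp : IsCompact B) :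
    hausdorffDist (frontier A) (frontier B) = hausdorffDist A B := by
  rcases Nat.eq_zero_or_pos n with hn | hn
  · subst hn
    have hAB : A = B := by
      obtain ⟨b, hb⟩ := hBne
      obtain ⟨a, ha⟩ := hAne
      ext x
      constructor <;> intro h
      · rwa [Subsingleton.elim x b]
      · rwa [Subsingleton.elim x a]
    rw [hAB, Metric.hausdorffDist_self_zero, Metric.hausdorffDist_self_zero]
  · set u : EuclideanSpace ℝ (Fin n) := EuclideanSpace.single ⟨0, hn⟩ (1:ℝ) with hudef
    have hu1 : ‖u‖ = 1 := by rw [hudef, EuclideanSpace.norm_single, norm_one]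
    have hu : u ≠ 0 := by
      intro h
      rw [h, norm_zero] at hu1
      norm_num at hu1
    obtain ⟨a₀, ha₀⟩ := hAne
    obtain ⟨b₀, hb₀⟩ := hBne
    obtain ⟨tA, htA, hFA⟩ := aux_ray_frontier hAcomp ha₀ hu
    obtain ⟨tB, htB, hFB⟩ := aux_ray_frontier hBcomp hb₀ hu
    have hFAne : (frontier A).Nonempty := ⟨_, hFA⟩
    have hFBne : (frontier B).Nonempty := ⟨_, hFB⟩
    have finAB : hausdorffEdist A B ≠ ⊤ :=
      hausdorffEdist_ne_top_of_nonempty_of_bounded ⟨a₀, ha₀⟩ ⟨b₀, hb₀⟩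
        hAcomp.isBounded hBcomp.isBounded
    have finF : hausdorffEdist (frontier A) (frontier B) ≠ ⊤ :=
      hausdorffEdist_ne_top_of_nonempty_of_bounded hFAne hFBne
        (hAcomp.isBounded.subset hAcomp.isClosed.frontier_subset)
        (hBcomp.isBounded.subset hBcomp.isClosed.frontier_subset)
    apply le_antisymm
    · apply hausdorffDist_le_of_infDist hausdorffDist_nonneg
      · intro x hx
        exact aux_stepB ⟨a₀, ha₀⟩ hAconv hAcomp ⟨b₀, hb₀⟩ hBcomp finAB hx
      · intro x hx
        have := aux_stepB ⟨b₀, hb₀⟩ hBconv hBcomp ⟨a₀, ha₀⟩ hAcomp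
          (by have h : hausdorffEDist B A ≠ ⊤ := (by rw [hausdorffEDist_comm]; exact finAB); exact h) hx
        rwa [hausdorffDist_comm] at this
    · apply hausdorffDist_le_of_infDist hausdorffDist_nonneg
      · intro a ha
        exact aux_stepA hBconv ⟨b₀, hb₀⟩ hBcomp.isClosed hAcomp hFBne finF hu ha
      · intro b hb
        have := aux_stepA hAconv ⟨a₀, ha₀⟩ hAcomp.isClosed hBcomp hFAne
          (by have h : hausdorffEDist (frontier B) (frontier A) ≠ ⊤ := (by rw [hausdorffEDist_comm]; exact finF); exact h) hu hb
        rwa [hausdorffDist_comm] at this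
end

section
/- Let A be a nonempty convex compact subset of ℝⁿ contained in the ball of radius M, and let ℓ¹, …, ℓᴺ ∈ S^{n-1} be finitely many unit directions with d_H(S^{n-1}, {ℓ¹,…,ℓᴺ}) ≤ ρ for some 0 ≤ ρ < 1. Let A_Δ be the convex hull of one supporting point y(ℓᵏ, A) ∈ A with ⟨ℓᵏ, y(ℓᵏ,A)⟩ = δ*(ℓᵏ, A) for each k. Then A_Δ ⊆ A and d_H(A, A_Δ) ≤ c·M·ρ for a constant c depending only on n (in fact one may take the bound 2Mρ/(1−ρ) or similar explicit bound). -/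
open Metric
open scoped RealInnerProductSpace

/-- Approximation of a convex compact set by the convex hull of supporting points in a
`ρ`-dense finite set of unit directions: `A_Δ ⊆ A` and `d_H(A, A_Δ) ≤ 2Mρ/(1-ρ)`. -/
theorem suppPoints_convexHull_approx {n N : ℕ} (hN : 0 < N) (M ρ : ℝ)
    (hρ0 : 0 ≤ ρ) (hρ1 : ρ < 1)
    (A : Set (EuclideanSpace ℝ (Fin n)))
    (hAne : A.Nonempty) (hAconv : Convex ℝ A) (hAcomp : IsCompact A)
    (hAM : A ⊆ closedBall (0 : EuclideanSpace ℝ (Fin n)) M)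
    (ℓ : Fin N → EuclideanSpace ℝ (Fin n))
    (hℓ : ∀ k, ℓ k ∈ sphere (0 : EuclideanSpace ℝ (Fin n)) 1)
    (hdense : hausdorffDist (sphere (0 : EuclideanSpace ℝ (Fin n)) 1)
      (Set.range ℓ) ≤ ρ)
    (y : Fin N → EuclideanSpace ℝ (Fin n))
    (hyA : ∀ k, y k ∈ A)
    (hysupp : ∀ k, ⟪ℓ k, y k⟫ = sSup ((fun x => ⟪ℓ k, x⟫) '' A)) :
    convexHull ℝ (Set.range y) ⊆ A ∧
      hausdorffDist A (convexHull ℝ (Set.range y)) ≤ 2 * M * ρ / (1 - ρ) := by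
  have hBsub : convexHull ℝ (Set.range y) ⊆ A :=
    convexHull_min (Set.range_subset_iff.2 hyA) hAconv
  refine ⟨hBsub, ?_⟩
  set B := convexHull ℝ (Set.range y) with hBdef
  have hBne : B.Nonempty := ⟨y ⟨0, hN⟩, subset_convexHull ℝ _ ⟨⟨0, hN⟩, rfl⟩⟩
  have hBcomp : IsCompact B := (Set.finite_range y).isCompact_convexHull (𝕜 := ℝ)
  have hBconv : Convex ℝ B := convex_convexHull ℝ _
  obtain ⟨a0, ha0⟩ := hAne
  have hM : 0 ≤ M := le_trans (norm_nonneg a0) (by simpa using hAM ha0)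
  have h1ρ : 0 < 1 - ρ := by linarith
  have hr0 : 0 ≤ 2 * M * ρ / (1 - ρ) := by positivity
  have hcomp : 2 * M * ρ ≤ 2 * M * ρ / (1 - ρ) := by
    rw [le_div_iff₀ h1ρ]
    nlinarith [mul_nonneg (mul_nonneg hM hρ0) hρ0]
  refine hausdorffDist_le_of_mem_dist hr0 ?_ (fun x hx => ⟨x, hBsub hx, by simp [hr0]⟩)
  intro x hx
  obtain ⟨z, hzB, hz⟩ := hBcomp.exists_infDist_eq_dist hBne x
  refine ⟨z, hzB, le_trans ?_ hcomp⟩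
  -- projection property
  have hproj : ∀ w ∈ B, ⟪x - z, w - z⟫ ≤ 0 := by
    rw [← norm_eq_iInf_iff_real_inner_le_zero hBconv hzB]
    rw [infDist_eq_iInf] at hz
    rw [dist_eq_norm] at hz
    rw [← hz]
    exact iInf_congr fun w => by rw [dist_eq_norm]
  rcases eq_or_lt_of_le (dist_nonneg : (0:ℝ) ≤ dist x z) with hd0 | hd0
  · rw [← hd0]; positivity
  set u : EuclideanSpace ℝ (Fin n) := x - z with hu
  have hune : u ≠ 0 := by
    intro h
    rw [dist_eq_norm] at hd0
    rw [← hu, h] at hd0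
    simp at hd0
  have hnu : 0 < ‖u‖ := norm_pos_iff.2 hune
  set v : EuclideanSpace ℝ (Fin n) := ‖u‖⁻¹ • u with hv
  have hvs : v ∈ sphere (0 : EuclideanSpace ℝ (Fin n)) 1 := by
    rw [mem_sphere_zero_iff_norm, hv, norm_smul]
    simp [abs_of_pos (inv_pos.2 hnu), inv_mul_cancel₀ hnu.ne']
  -- find a close direction ℓ k
  have hrange_ne : (Set.range ℓ).Nonempty := ⟨ℓ ⟨0, hN⟩, ⟨0, hN⟩, rfl⟩
  have hedist : EMetric.hausdorffEdist (sphere (0 : EuclideanSpace ℝ (Fin n)) 1)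
      (Set.range ℓ) ≠ ⊤ :=
    hausdorffEdist_ne_top_of_nonempty_of_bounded ⟨v, hvs⟩ hrange_ne
      (isBounded_sphere) ((Set.finite_range ℓ).isBounded)
  have hinf : infDist v (Set.range ℓ) ≤ ρ :=
    le_trans (infDist_le_hausdorffDist_of_mem hvs hedist) hdense
  obtain ⟨w, hw, hwe⟩ := ((Set.finite_range ℓ).isCompact).exists_infDist_eq_dist
    hrange_ne v
  obtain ⟨k, hk⟩ := hw
  have hkρ : ‖v - ℓ k‖ ≤ ρ := by
    rw [← dist_eq_norm, hk]
    rw [hwe] at hinf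
    exact hinf
  -- support property: ⟪ℓ k, x⟫ ≤ ⟪ℓ k, y k⟫
  have hbdd : BddAbove ((fun t => ⟪ℓ k, t⟫) '' A) :=
    (hAcomp.image (Continuous.inner continuous_const continuous_id)).bddAbove
  have hsupp : ⟪ℓ k, x⟫ ≤ ⟪ℓ k, y k⟫ := by
    rw [hysupp k]
    exact le_csSup hbdd ⟨x, hx, rfl⟩
  -- bound dist x z
  have hyk : y k ∈ B := subset_convexHull ℝ _ ⟨k, rfl⟩
  have h1 : ⟪v, y k - z⟫ ≤ 0 := by
    rw [hv, real_inner_smul_left]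
    exact mul_nonpos_of_nonneg_of_nonpos (inv_nonneg.2 hnu.le) (hproj _ hyk)
  have h2 : ⟪v, u⟫ = ‖u‖ := by
    rw [hv, real_inner_smul_left, real_inner_self_eq_norm_sq]
    field_simp
  have hdist : dist x z = ‖u‖ := by rw [dist_eq_norm]
  have h3 : dist x z ≤ ⟪v, x - y k⟫ := by
    have : (x - y k) = u - (y k - z) := by rw [hu]; abel
    rw [hdist, this, inner_sub_right, h2]
    linarith
  have h4 : ⟪v, x - y k⟫ = ⟪v - ℓ k, x - y k⟫ + ⟪ℓ k, x - y k⟫ := by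
    rw [inner_sub_left]; ring
  have hxM : ‖x‖ ≤ M := by simpa [mem_closedBall, dist_eq_norm] using hAM hx
  have hyM : ‖y k‖ ≤ M := by simpa [mem_closedBall, dist_eq_norm] using hAM (hyA k)
  have h5 : ⟪v - ℓ k, x - y k⟫ ≤ ρ * (2 * M) := by
    calc ⟪v - ℓ k, x - y k⟫ ≤ ‖v - ℓ k‖ * ‖x - y k‖ := real_inner_le_norm _ _
    _ ≤ ρ * (2 * M) := by
        apply mul_le_mul hkρ ?_ (norm_nonneg _) hρ0
        calc ‖x - y k‖ ≤ ‖x‖ + ‖y k‖ := norm_sub_le _ _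
        _ ≤ 2 * M := by linarith
  have h6 : ⟪ℓ k, x - y k⟫ ≤ 0 := by
    rw [inner_sub_right]; linarith
  calc dist x z ≤ ⟪v, x - y k⟫ := h3
  _ = ⟪v - ℓ k, x - y k⟫ + ⟪ℓ k, x - y k⟫ := h4
  _ ≤ ρ * (2 * M) + 0 := add_le_add h5 h6
  _ = 2 * M * ρ := by ring
end

section
/- The support function of the reachable set R(t) = Φ(t,t₀)S + ∫_{t₀}^{t} Φ(t,s)B(s)U ds in direction ℓ ∈ ℝⁿ equals δ*(ℓ, R(t)) = δ*(Φ(t,t₀)ᵀℓ, S) + ∫_{t₀}^{t} δ*((Φ(t,s)B(s))ᵀℓ, U) ds. -/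
open Matrix MeasureTheory intervalIntegral

lemma abs_dot_le' {m : ℕ} (a w : Fin m → ℝ) : |a ⬝ᵥ w| ≤ (m : ℝ) * ‖a‖ * ‖w‖ := by
  calc |a ⬝ᵥ w| ≤ ∑ j, |a j * w j| := Finset.abs_sum_le_sum_abs _ _
    _ ≤ ∑ _j : Fin m, ‖a‖ * ‖w‖ := by
        refine Finset.sum_le_sum fun j _ => ?_
        rw [abs_mul]
        have h1 : |a j| ≤ ‖a‖ := by
          simpa [Real.norm_eq_abs] using norm_le_pi_norm a j
        have h2 : |w j| ≤ ‖w‖ := by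
          simpa [Real.norm_eq_abs] using norm_le_pi_norm w j
        exact mul_le_mul h1 h2 (abs_nonneg _) (norm_nonneg _)
    _ = (m : ℝ) * ‖a‖ * ‖w‖ := by simp [Finset.sum_const, mul_assoc]

noncomputable def suppF {m : ℕ} (U : Set (Fin m → ℝ)) (a : Fin m → ℝ) : ℝ :=
  sSup ((fun v => a ⬝ᵥ v) '' U)

lemma dot_le_suppF {m : ℕ} {U : Set (Fin m → ℝ)} (hcomp : IsCompact U)
    {v : Fin m → ℝ} (hv : v ∈ U) (a : Fin m → ℝ) : a ⬝ᵥ v ≤ suppF U a :=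
  le_csSup (hcomp.image (continuous_const.dotProduct continuous_id)).bddAbove
    ⟨v, hv, rfl⟩

lemma suppF_le {m : ℕ} {U : Set (Fin m → ℝ)} (hne : U.Nonempty) {a : Fin m → ℝ} {r : ℝ}
    (hr : ∀ v ∈ U, a ⬝ᵥ v ≤ r) : suppF U a ≤ r := by
  refine csSup_le (hne.image _) ?_
  rintro _ ⟨v, hv, rfl⟩
  exact hr v hv

lemma suppF_attain {m : ℕ} {U : Set (Fin m → ℝ)} (hne : U.Nonempty) (hcomp : IsCompact U)
    (a : Fin m → ℝ) : ∃ v ∈ U, suppF U a = a ⬝ᵥ v := by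
  obtain ⟨v, hv, heq, -⟩ := hcomp.exists_sSup_image_eq_and_ge hne
    (continuous_const.dotProduct continuous_id).continuousOn
  exact ⟨v, hv, heq⟩

lemma suppF_lipschitz {m : ℕ} {U : Set (Fin m → ℝ)} (hne : U.Nonempty) (hcomp : IsCompact U) :
    ∃ K : NNReal, LipschitzWith K (suppF U) := by
  obtain ⟨R, hR⟩ := isBounded_iff_forall_norm_le.mp hcomp.isBounded
  obtain ⟨v₀, hv₀⟩ := id hne
  have hR0 : 0 ≤ R := le_trans (norm_nonneg v₀) (hR v₀ hv₀)
  have key : ∀ a b : Fin m → ℝ, suppF U a ≤ suppF U b + (m : ℝ) * R * dist a b := by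
    intro a b
    refine suppF_le hne fun v hv => ?_
    have h1 : a ⬝ᵥ v = b ⬝ᵥ v + (a - b) ⬝ᵥ v := by
      rw [sub_dotProduct]; ring
    have h2 : (a - b) ⬝ᵥ v ≤ (m : ℝ) * ‖a - b‖ * ‖v‖ :=
      le_trans (le_abs_self _) (abs_dot_le' _ _)
    have h3 : (m : ℝ) * ‖a - b‖ * ‖v‖ ≤ (m : ℝ) * ‖a - b‖ * R :=
      mul_le_mul_of_nonneg_left (hR v hv) (by positivity)
    have h4 : b ⬝ᵥ v ≤ suppF U b := dot_le_suppF hcomp hv b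
    rw [h1, dist_eq_norm]
    nlinarith [norm_nonneg (a - b)]
  refine ⟨Real.toNNReal ((m : ℝ) * R), LipschitzWith.of_dist_le_mul fun a b => ?_⟩
  rw [Real.coe_toNNReal _ (by positivity), Real.dist_eq, abs_sub_le_iff]
  constructor
  · have := key a b; nlinarith [dist_nonneg (x := a) (y := b)]
  · have := key b a; rw [dist_comm] at this; nlinarith [dist_nonneg (x := a) (y := b)]

noncomputable def dotCLM {n : ℕ} (ℓ : Fin n → ℝ) : (Fin n → ℝ) →L[ℝ] ℝ :=
  LinearMap.toContinuousLinearMap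
    { toFun := fun x => ℓ ⬝ᵥ x
      map_add' := fun x y => dotProduct_add ℓ x y
      map_smul' := fun c x => by
        simp [dotProduct, Finset.mul_sum, mul_left_comm] }

@[simp] lemma dotCLM_apply {n : ℕ} (ℓ x : Fin n → ℝ) : dotCLM ℓ x = ℓ ⬝ᵥ x := rfl

theorem reach_aux {n m : ℕ} (A : Matrix (Fin n) (Fin n) ℝ)
    (M : ℝ → Matrix (Fin n) (Fin m) ℝ) (hMc : Continuous M)
    (S : Set (Fin n → ℝ)) (U : Set (Fin m → ℝ))
    (hSne : S.Nonempty) (hScomp : IsCompact S)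
    (hUne : U.Nonempty) (hUcomp : IsCompact U)
    (t₀ t : ℝ) (ht : t₀ ≤ t) (ℓ : Fin n → ℝ) :
    sSup ((fun x => ℓ ⬝ᵥ x) ''
        {x | ∃ y₀ ∈ S, ∃ u : ℝ → Fin m → ℝ, Measurable u ∧ (∀ s, u s ∈ U) ∧
          x = A.mulVec y₀ + ∫ s in t₀..t, (M s).mulVec (u s)}) =
      suppF S (Aᵀ.mulVec ℓ) + ∫ s in t₀..t, suppF U ((M s)ᵀ.mulVec ℓ) := by
  classical
  have hcc : Continuous fun s => (M s)ᵀ.mulVec ℓ :=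
    hMc.matrix_transpose.matrix_mulVec continuous_const
  obtain ⟨K, hK⟩ := suppF_lipschitz hUne hUcomp
  have hgcont : Continuous fun s => suppF U ((M s)ᵀ.mulVec ℓ) := hK.continuous.comp hcc
  have hgint : IntervalIntegrable (fun s => suppF U ((M s)ᵀ.mulVec ℓ)) volume t₀ t :=
    hgcont.intervalIntegrable t₀ t
  obtain ⟨R, hR⟩ := isBounded_iff_forall_norm_le.mp hUcomp.isBounded
  obtain ⟨v₀, hv₀⟩ := id hUne
  have hR0 : 0 ≤ R := le_trans (norm_nonneg v₀) (hR v₀ hv₀)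
  have hMc' : Continuous fun s => (fun i j => M s i j : Fin n → Fin m → ℝ) :=
    continuous_pi fun i => continuous_pi fun j =>
      (continuous_apply j).comp ((continuous_apply i).comp hMc)
  obtain ⟨C, hC⟩ := isCompact_uIcc.exists_bound_of_continuousOn
    (s := Set.uIcc t₀ t) hMc'.continuousOn
  have hC0 : 0 ≤ C := le_trans (norm_nonneg _) (hC t₀ Set.left_mem_uIcc)
  have hent : ∀ s ∈ Set.uIcc t₀ t, ∀ i, ‖(M s i : Fin m → ℝ)‖ ≤ C := by
    intro s hs i
    exact (pi_norm_le_iff_of_nonneg hC0).mp (hC s hs) i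
  obtain ⟨C₂, hC₂⟩ := isCompact_uIcc.exists_bound_of_continuousOn
    (f := fun s => (M s)ᵀ.mulVec ℓ) (s := Set.uIcc t₀ t) hcc.continuousOn
  have hC₂0 : 0 ≤ C₂ := le_trans (norm_nonneg _) (hC₂ t₀ Set.left_mem_uIcc)
  -- dot product identities
  have hid : ∀ (P : Matrix (Fin n) (Fin m) ℝ) (w : Fin m → ℝ),
      ℓ ⬝ᵥ P.mulVec w = Pᵀ.mulVec ℓ ⬝ᵥ w := fun P w => by
    rw [Matrix.dotProduct_mulVec, Matrix.mulVec_transpose]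
  have hidA : ∀ y : Fin n → ℝ, ℓ ⬝ᵥ A.mulVec y = Aᵀ.mulVec ℓ ⬝ᵥ y := fun y => by
    rw [Matrix.dotProduct_mulVec, Matrix.mulVec_transpose]
  -- measurability
  have hFmeas : ∀ u : ℝ → Fin m → ℝ, Measurable u →
      Measurable fun s => (M s).mulVec (u s) := by
    intro u hu
    refine measurable_pi_lambda _ fun i => ?_
    simp only [Matrix.mulVec, dotProduct]
    refine Finset.measurable_sum _ fun j _ => ?_
    exact (((continuous_apply j).comp ((continuous_apply i).comp hMc)).measurable).mul
      ((measurable_pi_apply j).comp hu)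
  have hsmeas : ∀ u : ℝ → Fin m → ℝ, Measurable u →
      Measurable fun s => (M s)ᵀ.mulVec ℓ ⬝ᵥ u s := by
    intro u hu
    simp only [dotProduct]
    refine Finset.measurable_sum _ fun j _ => ?_
    exact (((continuous_apply j).comp hcc).measurable).mul ((measurable_pi_apply j).comp hu)
  -- integrability of the vector integrand
  have hFint : ∀ u : ℝ → Fin m → ℝ, Measurable u → (∀ s, u s ∈ U) →
      IntervalIntegrable (fun s => (M s).mulVec (u s)) volume t₀ t := by
    intro u hu huU
    rw [intervalIntegrable_iff]
    refine Integrable.mono' (g := fun _ => (m : ℝ) * C * R)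
      ?_ ((hFmeas u hu).aestronglyMeasurable) ?_
    · exact integrableOn_const measure_Ioc_lt_top.ne
    · filter_upwards [ae_restrict_mem measurableSet_uIoc] with s hs
      have hsI : s ∈ Set.uIcc t₀ t := Set.uIoc_subset_uIcc hs
      rw [pi_norm_le_iff_of_nonneg (by positivity)]
      intro i
      have hrow : ‖(M s i : Fin m → ℝ)‖ ≤ C := hent s hsI i
      have : ‖(M s).mulVec (u s) i‖ = |(M s i : Fin m → ℝ) ⬝ᵥ u s| := rfl
      rw [this]
      calc |(M s i : Fin m → ℝ) ⬝ᵥ u s| ≤ (m : ℝ) * ‖(M s i : Fin m → ℝ)‖ * ‖u s‖ :=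
            abs_dot_le' _ _
        _ ≤ (m : ℝ) * C * ‖u s‖ :=
            mul_le_mul_of_nonneg_right
              (mul_le_mul_of_nonneg_left hrow (Nat.cast_nonneg m)) (norm_nonneg _)
        _ ≤ (m : ℝ) * C * R := mul_le_mul_of_nonneg_left (hR (u s) (huU s)) (by positivity)
  -- integrability of the scalar integrand
  have hsint : ∀ u : ℝ → Fin m → ℝ, Measurable u → (∀ s, u s ∈ U) →
      IntervalIntegrable (fun s => (M s)ᵀ.mulVec ℓ ⬝ᵥ u s) volume t₀ t := by
    intro u hu huU
    rw [intervalIntegrable_iff]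
    refine Integrable.mono' (g := fun _ => (m : ℝ) * C₂ * R)
      ?_ ((hsmeas u hu).aestronglyMeasurable) ?_
    · exact integrableOn_const measure_Ioc_lt_top.ne
    · filter_upwards [ae_restrict_mem measurableSet_uIoc] with s hs
      have hsI : s ∈ Set.uIcc t₀ t := Set.uIoc_subset_uIcc hs
      rw [Real.norm_eq_abs]
      calc |(M s)ᵀ.mulVec ℓ ⬝ᵥ u s| ≤ (m : ℝ) * ‖(M s)ᵀ.mulVec ℓ‖ * ‖u s‖ := abs_dot_le' _ _
        _ ≤ (m : ℝ) * C₂ * ‖u s‖ :=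
            mul_le_mul_of_nonneg_right
              (mul_le_mul_of_nonneg_left (hC₂ s hsI) (Nat.cast_nonneg m)) (norm_nonneg _)
        _ ≤ (m : ℝ) * C₂ * R := mul_le_mul_of_nonneg_left (hR (u s) (huU s)) (by positivity)
  -- swapping dot product and integral
  have hswap : ∀ u : ℝ → Fin m → ℝ, Measurable u → (∀ s, u s ∈ U) →
      ℓ ⬝ᵥ (∫ s in t₀..t, (M s).mulVec (u s)) =
        ∫ s in t₀..t, (M s)ᵀ.mulVec ℓ ⬝ᵥ u s := by
    intro u hu huU
    rw [← dotCLM_apply, ← ContinuousLinearMap.intervalIntegral_comp_comm _ (hFint u hu huU)]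
    exact intervalIntegral.integral_congr fun s _ => hid (M s) (u s)
  -- upper bound
  have hub : ∀ x ∈ {x | ∃ y₀ ∈ S, ∃ u : ℝ → Fin m → ℝ, Measurable u ∧ (∀ s, u s ∈ U) ∧
      x = A.mulVec y₀ + ∫ s in t₀..t, (M s).mulVec (u s)},
      ℓ ⬝ᵥ x ≤ suppF S (Aᵀ.mulVec ℓ) + ∫ s in t₀..t, suppF U ((M s)ᵀ.mulVec ℓ) := by
    rintro x ⟨y₀, hy₀, u, hu, huU, rfl⟩
    rw [dotProduct_add, hidA, hswap u hu huU]
    refine add_le_add (dot_le_suppF hScomp hy₀ _) ?_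
    exact intervalIntegral.integral_mono_on ht (hsint u hu huU) hgint
      fun s _ => dot_le_suppF hUcomp (huU s) _
  -- nonemptiness and boundedness of the image
  obtain ⟨y₁, hy₁⟩ := id hSne
  have hmem0 : (A.mulVec y₁ + ∫ s in t₀..t, (M s).mulVec v₀) ∈
      {x | ∃ y₀ ∈ S, ∃ u : ℝ → Fin m → ℝ, Measurable u ∧ (∀ s, u s ∈ U) ∧
        x = A.mulVec y₀ + ∫ s in t₀..t, (M s).mulVec (u s)} :=
    ⟨y₁, hy₁, fun _ => v₀, measurable_const, fun _ => hv₀, rfl⟩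
  have hne' : ((fun x => ℓ ⬝ᵥ x) '' _).Nonempty := ⟨_, ⟨_, hmem0, rfl⟩⟩
  have hbdd : BddAbove ((fun x => ℓ ⬝ᵥ x) ''
      {x | ∃ y₀ ∈ S, ∃ u : ℝ → Fin m → ℝ, Measurable u ∧ (∀ s, u s ∈ U) ∧
        x = A.mulVec y₀ + ∫ s in t₀..t, (M s).mulVec (u s)}) := by
    refine ⟨suppF S (Aᵀ.mulVec ℓ) + ∫ s in t₀..t, suppF U ((M s)ᵀ.mulVec ℓ), ?_⟩
    rintro _ ⟨x, hx, rfl⟩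
    exact hub x hx
  refine le_antisymm (csSup_le hne' ?_) ?_
  · rintro _ ⟨x, hx, rfl⟩
    exact hub x hx
  -- lower bound
  refine le_of_forall_pos_le_add fun η hη => ?_
  have htpos : (0:ℝ) < t - t₀ + 1 := by linarith
  set ε := η / (t - t₀ + 1) with hεdef
  have hε : 0 < ε := div_pos hη htpos
  obtain ⟨y₀, hy₀, hSy⟩ := suppF_attain hSne hScomp (Aᵀ.mulVec ℓ)
  haveI : Nonempty U := hUne.to_subtype
  obtain ⟨e₀, he₀⟩ := TopologicalSpace.exists_dense_seq U
  have he : ∀ v ∈ U, ∀ δ > (0:ℝ), ∃ k, dist v ((e₀ k : Fin m → ℝ)) < δ := by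
    intro v hv δ hδ
    obtain ⟨k, hk⟩ := Metric.denseRange_iff.mp he₀ ⟨v, hv⟩ δ hδ
    exact ⟨k, by simpa [Subtype.dist_eq] using hk⟩
  have hall : ∀ s, ∃ k,
      suppF U ((M s)ᵀ.mulVec ℓ) - ε < (M s)ᵀ.mulVec ℓ ⬝ᵥ (e₀ k : Fin m → ℝ) := by
    intro s
    obtain ⟨v, hv, hveq⟩ := suppF_attain hUne hUcomp ((M s)ᵀ.mulVec ℓ)
    set a := (M s)ᵀ.mulVec ℓ with ha
    have hpos : (0:ℝ) < (m : ℝ) * ‖a‖ + 1 := by positivity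
    obtain ⟨k, hk⟩ := he v hv (ε / ((m : ℝ) * ‖a‖ + 1)) (div_pos hε hpos)
    refine ⟨k, ?_⟩
    have h1 : a ⬝ᵥ v - a ⬝ᵥ (e₀ k : Fin m → ℝ) = a ⬝ᵥ (v - (e₀ k : Fin m → ℝ)) := by
      rw [dotProduct_sub]
    have h2 : |a ⬝ᵥ (v - (e₀ k : Fin m → ℝ))| ≤
        (m : ℝ) * ‖a‖ * ‖v - (e₀ k : Fin m → ℝ)‖ := abs_dot_le' _ _
    rw [dist_eq_norm] at hk
    have h4 : (m : ℝ) * ‖a‖ * ‖v - (e₀ k : Fin m → ℝ)‖ < ε := by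
      calc (m : ℝ) * ‖a‖ * ‖v - (e₀ k : Fin m → ℝ)‖
          ≤ (m : ℝ) * ‖a‖ * (ε / ((m : ℝ) * ‖a‖ + 1)) := by
            refine mul_le_mul_of_nonneg_left hk.le (by positivity)
        _ < ((m : ℝ) * ‖a‖ + 1) * (ε / ((m : ℝ) * ‖a‖ + 1)) := by
            refine mul_lt_mul_of_pos_right (lt_add_one _) (div_pos hε hpos)
        _ = ε := by field_simp
    have h5 : a ⬝ᵥ (v - (e₀ k : Fin m → ℝ)) < ε := lt_of_le_of_lt (le_trans (le_abs_self _) h2) h4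
    have h6 := hveq
    linarith [h1, h5]
  have hp : ∀ k : ℕ, MeasurableSet {s : ℝ |
      suppF U ((M s)ᵀ.mulVec ℓ) - ε < (M s)ᵀ.mulVec ℓ ⬝ᵥ (e₀ k : Fin m → ℝ)} := by
    intro k
    exact measurableSet_lt (hgcont.sub continuous_const).measurable
      (hcc.dotProduct continuous_const).measurable
  have hu : Measurable fun s => (e₀ (Nat.find (hall s)) : Fin m → ℝ) :=
    Measurable.find (f := fun k (_ : ℝ) => (e₀ k : Fin m → ℝ)) (fun k => measurable_const)
      hp hall
  have huU : ∀ s, (e₀ (Nat.find (hall s)) : Fin m → ℝ) ∈ U := fun s => (e₀ _).2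
  have hugt : ∀ s, suppF U ((M s)ᵀ.mulVec ℓ) - ε <
      (M s)ᵀ.mulVec ℓ ⬝ᵥ (e₀ (Nat.find (hall s)) : Fin m → ℝ) := fun s => Nat.find_spec (hall s)
  set u : ℝ → Fin m → ℝ := fun s => (e₀ (Nat.find (hall s)) : Fin m → ℝ) with hu_def
  have hmem : (A.mulVec y₀ + ∫ s in t₀..t, (M s).mulVec (u s)) ∈
      {x | ∃ y₀ ∈ S, ∃ u : ℝ → Fin m → ℝ, Measurable u ∧ (∀ s, u s ∈ U) ∧
        x = A.mulVec y₀ + ∫ s in t₀..t, (M s).mulVec (u s)} :=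
    ⟨y₀, hy₀, u, hu, huU, rfl⟩
  have hle1 : ℓ ⬝ᵥ (A.mulVec y₀ + ∫ s in t₀..t, (M s).mulVec (u s)) ≤
      sSup ((fun x => ℓ ⬝ᵥ x) ''
        {x | ∃ y₀ ∈ S, ∃ u : ℝ → Fin m → ℝ, Measurable u ∧ (∀ s, u s ∈ U) ∧
          x = A.mulVec y₀ + ∫ s in t₀..t, (M s).mulVec (u s)}) :=
    le_csSup hbdd ⟨_, hmem, rfl⟩
  have hval : ℓ ⬝ᵥ (A.mulVec y₀ + ∫ s in t₀..t, (M s).mulVec (u s)) =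
      Aᵀ.mulVec ℓ ⬝ᵥ y₀ + ∫ s in t₀..t, (M s)ᵀ.mulVec ℓ ⬝ᵥ u s := by
    rw [dotProduct_add, hidA, hswap u hu huU]
  have h5 : ∫ s in t₀..t, (suppF U ((M s)ᵀ.mulVec ℓ) - ε) ≤
      ∫ s in t₀..t, (M s)ᵀ.mulVec ℓ ⬝ᵥ u s :=
    intervalIntegral.integral_mono_on ht (hgint.sub intervalIntegrable_const)
      (hsint u hu huU) fun s _ => (hugt s).le
  have h6 : ∫ s in t₀..t, (suppF U ((M s)ᵀ.mulVec ℓ) - ε) =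
      (∫ s in t₀..t, suppF U ((M s)ᵀ.mulVec ℓ)) - ε * (t - t₀) := by
    rw [intervalIntegral.integral_sub hgint intervalIntegrable_const,
      intervalIntegral.integral_const, smul_eq_mul]
    ring
  have hεt : ε * (t - t₀) ≤ η := by
    have : ε * (t - t₀) ≤ ε * (t - t₀ + 1) := by nlinarith
    have h7 : ε * (t - t₀ + 1) = η := by
      rw [hεdef]; field_simp
    linarith
  linarith [hle1, hval, h5, h6, hSy]

/-- Support function of the reachable set
`R(t) = Φ(t,t₀)S + ∫_{t₀}^{t} Φ(t,s)B(s)U ds`: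
`δ*(ℓ, R(t)) = δ*(Φ(t,t₀)ᵀℓ, S) + ∫_{t₀}^{t} δ*((Φ(t,s)B(s))ᵀℓ, U) ds`. -/
theorem suppFun_reachable_set {n m : ℕ}
    (Φ : ℝ → ℝ → Matrix (Fin n) (Fin n) ℝ)
    (B : ℝ → Matrix (Fin n) (Fin m) ℝ)
    (hΦ : Continuous fun p : ℝ × ℝ => Φ p.1 p.2) (hB : Continuous B)
    (hΦid : ∀ s, Φ s s = 1)
    (S : Set (Fin n → ℝ)) (U : Set (Fin m → ℝ))
    (hSne : S.Nonempty) (hSconv : Convex ℝ S) (hScomp : IsCompact S)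
    (hUne : U.Nonempty) (hUconv : Convex ℝ U) (hUcomp : IsCompact U)
    (t₀ t : ℝ) (ht : t₀ ≤ t) (ℓ : Fin n → ℝ) :
    sSup ((fun x => ℓ ⬝ᵥ x) ''
        {x | ∃ y₀ ∈ S, ∃ u : ℝ → Fin m → ℝ, Measurable u ∧ (∀ s, u s ∈ U) ∧
          x = (Φ t t₀).mulVec y₀ + ∫ s in t₀..t, (Φ t s * B s).mulVec (u s)}) =
      sSup ((fun x => (Φ t t₀)ᵀ.mulVec ℓ ⬝ᵥ x) '' S) +
        ∫ s in t₀..t, sSup ((fun v => (Φ t s * B s)ᵀ.mulVec ℓ ⬝ᵥ v) '' U) := by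
  have hMc : Continuous fun s => Φ t s * B s :=
    (hΦ.comp (continuous_const.prodMk continuous_id)).matrix_mul hB
  exact reach_aux (Φ t t₀) (fun s => Φ t s * B s) hMc S U hSne hScomp hUne hUcomp t₀ t ht ℓ
end
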